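/- Let A be an Archimedean linearly ordered subgroup of the reals (or any Archimedean linearly ordered Abelian group). If A contains a strictly decreasing sequence of positive elements, then A contains a non-trivial strongly decreasing sequence, i.e., a sequence (b_i) not identically 0 such that for each i there exists n_i ≥ 4 with n_i · b_{i+1} ≥ b_i ≥ 2 · b_{i+1}. -/

import Mathlib

theorem exists_strongly_decreasing_of_strictly_decreasing {α : Type*}
    [AddCommGroup α] [LinearOrder α] [IsOrderedAddMonoid α] [Archimedean α]
    (a : ℕ → α) (hpos : ∀ i, 0 < a i) (hdec : ∀ i, a (i + 1) < a i) :
    ∃ b : ℕ → α, (¬ ∀ i, b i = 0) ∧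
      ∀ i, ∃ n : ℕ, 4 ≤ n ∧ b i ≤ n • b (i + 1) ∧ 2 • b (i + 1) ≤ b i := by
  -- Step 1: there is no minimal positive element.
  have dense : ∀ x : α, 0 < x → ∃ y : α, 0 < y ∧ y < x := by
    by_contra h
    push_neg at h
    obtain ⟨ε, hε, hmin⟩ := h
    have hstep : ∀ i, a (i + 1) + ε ≤ a i := by
      intro i
      have h1 : 0 < a i - a (i + 1) := sub_pos.mpr (hdec i)
      have h2 : ε ≤ a i - a (i + 1) := hmin _ h1
      calc a (i + 1) + ε ≤ a (i + 1) + (a i - a (i + 1)) := add_le_add_right h2 _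
        _ = a i := by abel
    have hbound : ∀ n : ℕ, a n + n • ε ≤ a 0 := by
      intro n
      induction n with
      | zero => simp
      | succ k ih =>
        calc a (k + 1) + (k + 1) • ε = (a (k + 1) + ε) + k • ε := by
              rw [succ_nsmul]; abel
          _ ≤ a k + k • ε := add_le_add_left (hstep k) _
          _ ≤ a 0 := ih
    obtain ⟨n, hn⟩ := Archimedean.arch (a 0) hε
    have h1 : n • ε < a n + n • ε := lt_add_of_pos_left _ (hpos n)
    exact absurd (h1.trans_le ((hbound n).trans hn)) (lt_irrefl _)
  -- Step 2: halving step.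
  have key : ∀ b : α, 0 < b → ∃ c : α, 0 < c ∧ 2 • c ≤ b ∧ ∃ n : ℕ, 4 ≤ n ∧ b ≤ n • c := by
    intro b hb
    obtain ⟨y, hy0, hyb⟩ := dense b hb
    have hc0 : 0 < min y (b - y) := lt_min hy0 (sub_pos.mpr hyb)
    refine ⟨min y (b - y), hc0, ?_, ?_⟩
    · calc 2 • min y (b - y) = min y (b - y) + min y (b - y) := two_nsmul _
        _ ≤ y + (b - y) := add_le_add (min_le_left _ _) (min_le_right _ _)
        _ = b := by abel
    · obtain ⟨n, hn⟩ := Archimedean.arch b hc0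
      exact ⟨max n 4, le_max_right _ _,
        hn.trans (nsmul_le_nsmul_left hc0.le (le_max_left _ _))⟩
  choose F hF0 hF2 N hN4 hFN using key
  -- Step 3: recursive construction.
  let g : ℕ → {x : α // 0 < x} := fun i =>
    Nat.rec ⟨a 0, hpos 0⟩ (fun _ p => ⟨F p.1 p.2, hF0 p.1 p.2⟩) i
  refine ⟨fun i => (g i).1, ?_, ?_⟩
  · intro h
    exact absurd (h 0) (ne_of_gt (hpos 0))
  · intro i
    refine ⟨N (g i).1 (g i).2, hN4 _ _, ?_, ?_⟩
    · exact hFN (g i).1 (g i).2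
    · exact hF2 (g i).1 (g i).2
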